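/- Let $a\ge 1$, $b\ge 2$ be integers and $Q(t)=\sum_{k=0}^{b-1}(-1)^k\binom{a+b-1}{k}t^{b-1-k}$. Then $Q$ is a polynomial of degree $b-1$ over $\mathbb C$ with $Q(0)\ne 0$, $Q(1)\ne 0$, and $Q$ has no multiple roots; consequently $Q$ has exactly $b-1$ distinct roots in $\mathbb C\setminus\{0,1\}$. -/

import Mathlib

open Finset Polynomial

lemma alt_sum_choose (n m : ℕ) :
    ∑ k ∈ Finset.range (m + 1), (-1 : ℂ) ^ k * ((n + 1).choose k : ℂ)
      = (-1) ^ m * (n.choose m : ℂ) := by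
  induction m with
  | zero => simp
  | succ m ih =>
    rw [Finset.sum_range_succ, ih, Nat.choose_succ_succ]
    push_cast
    ring

lemma alt_sum_choose' (N b : ℕ) (hb : 1 ≤ b) :
    ∑ k ∈ Finset.range b, (-1 : ℂ) ^ k * ((N + 1).choose k : ℂ)
      = (-1) ^ (b - 1) * (N.choose (b - 1) : ℂ) := by
  obtain ⟨m, rfl⟩ : ∃ m, b = m + 1 := ⟨b - 1, by omega⟩
  simpa using alt_sum_choose N m

theorem statement4 (a b : ℕ) (ha : 1 ≤ a) (hb : 2 ≤ b) :
    ∀ Q : Polynomial ℂ,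
      Q = ∑ k ∈ Finset.range b,
            Polynomial.C ((-1 : ℂ) ^ k * ((a + b - 1).choose k : ℂ)) *
              Polynomial.X ^ (b - 1 - k) →
      Q.natDegree = b - 1 ∧ Q.eval 0 ≠ 0 ∧ Q.eval 1 ≠ 0 ∧ Q.roots.Nodup ∧
        Q.roots.toFinset.card = b - 1 ∧ ∀ z ∈ Q.roots, z ≠ 0 ∧ z ≠ 1 := by
  intro Q hQ
  set n := a + b - 1 with hn
  -- leading coefficient
  have hcoeff : Q.coeff (b - 1) = 1 := by
    rw [hQ, Polynomial.finset_sum_coeff]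
    rw [Finset.sum_eq_single 0]
    · simp
    · intro k hk hk0
      simp only [Finset.mem_range] at hk
      simp only [Polynomial.coeff_C_mul, Polynomial.coeff_X_pow]
      rw [if_neg (by omega), mul_zero]
    · intro h
      exact absurd (Finset.mem_range.mpr (by omega)) h
  have hQne : Q ≠ 0 := fun h => by simp [h] at hcoeff
  have hdeg : Q.natDegree = b - 1 := by
    refine le_antisymm ?_ (Polynomial.le_natDegree_of_ne_zero (by rw [hcoeff]; exact one_ne_zero))
    rw [hQ]
    apply Polynomial.natDegree_sum_le_of_forall_le
    intro k hk
    exact (Polynomial.natDegree_C_mul_X_pow_le _ _).trans (by omega)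
  -- eval 0
  have h0 : Q.eval 0 = (-1) ^ (b - 1) * ((n.choose (b - 1) : ℂ)) := by
    rw [hQ, Polynomial.eval_finset_sum]
    simp only [Polynomial.eval_mul, Polynomial.eval_C, Polynomial.eval_pow, Polynomial.eval_X]
    rw [Finset.sum_eq_single (b - 1)]
    · simp
    · intro k hk hk0
      simp only [Finset.mem_range] at hk
      rw [zero_pow (by omega : b - 1 - k ≠ 0), mul_zero]
    · intro h
      exact absurd (Finset.mem_range.mpr (by omega)) h
  have h0ne : Q.eval 0 ≠ 0 := by
    rw [h0]
    exact mul_ne_zero (pow_ne_zero _ (by norm_num))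
      (Nat.cast_ne_zero.mpr (Nat.choose_pos (by omega)).ne')
  -- eval 1
  have h1 : Q.eval 1 = (-1) ^ (b - 1) * (((a + b - 2).choose (b - 1) : ℂ)) := by
    rw [hQ, Polynomial.eval_finset_sum]
    simp only [Polynomial.eval_mul, Polynomial.eval_C, Polynomial.eval_pow, Polynomial.eval_X,
      one_pow, mul_one]
    rw [show n = (a + b - 2) + 1 from by omega]
    exact alt_sum_choose' (a + b - 2) b (by omega)
  have h1ne : Q.eval 1 ≠ 0 := by
    rw [h1]
    exact mul_ne_zero (pow_ne_zero _ (by norm_num))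
      (Nat.cast_ne_zero.mpr (Nat.choose_pos (by omega)).ne')
  -- eval formulas
  have hQe : ∀ z : ℂ, Q.eval z
      = ∑ k ∈ Finset.range b, (-1 : ℂ) ^ k * (n.choose k : ℂ) * z ^ (b - 1 - k) := by
    intro z
    rw [hQ, Polynomial.eval_finset_sum]
    simp
  have hQd : ∀ z : ℂ, (Polynomial.derivative Q).eval z
      = ∑ k ∈ Finset.range b,
          (-1 : ℂ) ^ k * (n.choose k : ℂ) * (((b - 1 - k : ℕ) : ℂ) * z ^ (b - 1 - k - 1)) := by
    intro z
    rw [hQ, map_sum, Polynomial.eval_finset_sum]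
    refine Finset.sum_congr rfl fun k _ => ?_
    rw [Polynomial.derivative_C_mul, Polynomial.derivative_X_pow]
    simp [mul_assoc]
  -- key identity
  have key : ∀ z : ℂ,
      (n : ℂ) * z * Q.eval z - (z - 1) * ((a : ℂ) * Q.eval z + z * (Polynomial.derivative Q).eval z)
        = (-1) ^ (b - 1) * (b : ℂ) * (n.choose b : ℂ) := by
    intro z
    rw [hQe z, hQd z]
    set f : ℕ → ℂ := fun j => (-1 : ℂ) ^ j * (j : ℂ) * ((n.choose j : ℕ) : ℂ) * z ^ (b - j)
      with hf
    have hfk : ∀ j : ℕ, f j = (-1 : ℂ) ^ j * (j : ℂ) * ((n.choose j : ℕ) : ℂ) * z ^ (b - j) :=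
      fun j => rfl
    have step : (n : ℂ) * z * (∑ k ∈ Finset.range b, (-1 : ℂ) ^ k * (n.choose k : ℂ) * z ^ (b - 1 - k))
        - (z - 1) * ((a : ℂ) * (∑ k ∈ Finset.range b, (-1 : ℂ) ^ k * (n.choose k : ℂ) * z ^ (b - 1 - k))
          + z * ∑ k ∈ Finset.range b,
              (-1 : ℂ) ^ k * (n.choose k : ℂ) * (((b - 1 - k : ℕ) : ℂ) * z ^ (b - 1 - k - 1)))
        = ∑ k ∈ Finset.range b, (f k - f (k + 1)) := by
      rw [Finset.mul_sum, Finset.mul_sum, Finset.mul_sum, ← Finset.sum_add_distrib,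
        Finset.mul_sum, ← Finset.sum_sub_distrib]
      refine Finset.sum_congr rfl fun k hk => ?_
      simp only [Finset.mem_range] at hk
      rw [hfk, hfk]
      have hbk : b - k = (b - 1 - k) + 1 := by omega
      have hbk1 : b - (k + 1) = b - 1 - k := by omega
      rw [hbk, hbk1]
      have h4 : ((n.choose (k + 1) : ℕ) : ℂ) * ((k : ℂ) + 1)
          = ((n.choose k : ℕ) : ℂ) * ((a : ℂ) + ((b - 1 - k : ℕ) : ℂ)) := by
        have h := Nat.choose_succ_right_eq n k
        have hnk : n - k = a + (b - 1 - k) := by omega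
        rw [hnk] at h
        exact_mod_cast h
      have h5 : (n : ℂ) = (a : ℂ) + ((b - 1 - k : ℕ) : ℂ) + (k : ℂ) := by
        have : n = a + (b - 1 - k) + k := by omega
        exact_mod_cast this
      rcases Nat.eq_zero_or_pos (b - 1 - k) with he | he
      · rw [he] at h4 h5 ⊢
        push_cast at h4 h5 ⊢
        linear_combination ((-1 : ℂ) ^ k * (n.choose k : ℂ) * z) * h5
          - ((-1 : ℂ) ^ k) * h4
      · obtain ⟨m, hm⟩ : ∃ m, b - 1 - k = m + 1 := ⟨b - 1 - k - 1, by omega⟩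
        rw [hm] at h4 h5 ⊢
        simp only [Nat.add_sub_cancel]
        push_cast at h4 h5 ⊢
        linear_combination ((-1 : ℂ) ^ k * (n.choose k : ℂ) * z ^ (m + 1) * z) * h5
          - ((-1 : ℂ) ^ k * z ^ (m + 1)) * h4
    rw [step, Finset.sum_range_sub']
    rw [hfk, hfk]
    simp only [Nat.sub_self, pow_zero, Nat.cast_zero]
    rw [show b = (b - 1) + 1 from by omega]
    push_cast
    ring
  -- no common root of Q and Q'
  have hsep : ∀ z : ℂ, Q.IsRoot z → ¬ (Polynomial.derivative Q).IsRoot z := by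
    intro z hz hz'
    have hz0 : Q.eval z = 0 := hz
    have hz1 : (Polynomial.derivative Q).eval z = 0 := hz'
    have hk := key z
    rw [hz0, hz1] at hk
    simp only [mul_zero, zero_mul, add_zero, sub_zero, zero_sub, zero_add] at hk
    have hne : (-1 : ℂ) ^ (b - 1) * (b : ℂ) * (n.choose b : ℂ) ≠ 0 := by
      refine mul_ne_zero (mul_ne_zero (pow_ne_zero _ (by norm_num)) ?_) ?_
      · exact_mod_cast (by omega : (b : ℕ) ≠ 0)
      · exact Nat.cast_ne_zero.mpr (Nat.choose_pos (by omega)).ne'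
    exact hne hk.symm
  have hnodup : Q.roots.Nodup := by
    classical
    rw [Multiset.nodup_iff_count_le_one]
    intro z
    rw [Polynomial.count_roots]
    by_contra h
    push_neg at h
    obtain ⟨hz, hz'⟩ := (Polynomial.one_lt_rootMultiplicity_iff_isRoot hQne).mp h
    exact hsep z hz hz'
  have hcard : Q.roots.toFinset.card = b - 1 := by
    rw [Multiset.toFinset_card_of_nodup hnodup]
    have hsplit : Q.Splits := IsAlgClosed.splits Q
    have := hsplit.natDegree_eq_card_roots
    omega
  refine ⟨hdeg, h0ne, h1ne, hnodup, hcard, ?_⟩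
  intro z hzmem
  have hz : Q.IsRoot z := (Polynomial.mem_roots hQne).mp hzmem
  constructor
  · rintro rfl; exact h0ne hz
  · rintro rfl; exact h1ne hz
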